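/- Let $d \geq 2$, $0 < r < 1$, let $\mu$ be a finite nonnegative Borel measure supported on $S^d \subset \mathbb{R}^{d+1}$, let $t_1, \dots, t_n \in S^d$ be distinct points, and let $R_1, \dots, R_n$ be a disjoint partition of $S^d$ into Borel sets with $t_k \in R_k$ for each $k$. Define the discrete measure $\nu_n = \sum_{k=1}^n \mu(R_k) \delta_{t_k}$ and the signed measure $\sigma = \mu - \nu_n$. Then for every $x \in S^d$, the Newtonian potential satisfies $\left| \int_{S^d} \|rx - y\|^{-(d-1)} \, d\sigma(y) \right| \leq (d-1)\,\mu(S^d)\,(1-r)^{-(d+1)} \cdot \max_{1 \leq k \leq n} \operatorname{diam}(R_k)$. -/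

import Mathlib

open MeasureTheory

/-- Mean value inequality for `s ↦ s ^ (-p)` on `[c, ∞)`. -/
lemma rpow_neg_lip {p c : ℝ} (hp : 0 ≤ p) (hc : 0 < c) {a b : ℝ} (ha : c ≤ a) (hb : c ≤ b) :
    |a ^ (-p) - b ^ (-p)| ≤ p * c ^ (-(p + 1)) * |a - b| := by
  have hderiv : ∀ s ∈ Set.Ici c, HasDerivWithinAt (fun s : ℝ => s ^ (-p))
      (-p * s ^ (-p - 1)) (Set.Ici c) s := by
    intro s hs
    have hs0 : s ≠ 0 := by have := hc.trans_le hs; positivity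
    exact (Real.hasDerivAt_rpow_const (p := -p) (Or.inl hs0)).hasDerivWithinAt
  have hbound : ∀ s ∈ Set.Ici c, ‖-p * s ^ (-p - 1)‖ ≤ p * c ^ (-(p + 1)) := by
    intro s hs
    have hs0 : (0 : ℝ) < s := hc.trans_le hs
    have h1 : s ^ (-p - 1) ≤ c ^ (-p - 1) :=
      Real.rpow_le_rpow_of_nonpos hc hs (by linarith)
    have h2 : (0 : ℝ) ≤ s ^ (-p - 1) := Real.rpow_nonneg hs0.le _
    rw [norm_mul, Real.norm_eq_abs, Real.norm_eq_abs, abs_neg, abs_of_nonneg hp,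
      abs_of_nonneg h2, show -(p + 1) = -p - 1 by ring]
    exact mul_le_mul_of_nonneg_left h1 hp
  have := (convex_Ici c).norm_image_sub_le_of_norm_hasDerivWithin_le hderiv hbound hb ha
  simpa [Real.norm_eq_abs] using this

/-- Theorem 4(a): discrepancy bound for the Newtonian potential of `σ = μ - ν_n`,
where `ν_n = ∑ μ(R_k) δ_{t_k}` for a partition `R_1, …, R_n` of `S^d` with `t_k ∈ R_k`:
`|U^σ(rx)| ≤ (d-1) ‖μ‖ (1-r)^{-(d+1)} max_k diam(R_k)` for `x ∈ S^d`. -/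
theorem stmt_4 (d n : ℕ) (hd : 2 ≤ d) (hn : 1 ≤ n) (r : ℝ) (hr : 0 < r) (hr1 : r < 1)
    (μ : Measure (EuclideanSpace ℝ (Fin (d + 1)))) [IsFiniteMeasure μ]
    (hμsupp : μ (Metric.sphere (0 : EuclideanSpace ℝ (Fin (d + 1))) 1)ᶜ = 0)
    (t : Fin n → EuclideanSpace ℝ (Fin (d + 1)))
    (ht : ∀ k, t k ∈ Metric.sphere (0 : EuclideanSpace ℝ (Fin (d + 1))) 1)
    (htinj : Function.Injective t)
    (R : Fin n → Set (EuclideanSpace ℝ (Fin (d + 1))))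
    (hRmeas : ∀ k, MeasurableSet (R k))
    (hRdisj : Pairwise (Function.onFun Disjoint R))
    (hRcover : (⋃ k, R k) = Metric.sphere (0 : EuclideanSpace ℝ (Fin (d + 1))) 1)
    (htR : ∀ k, t k ∈ R k)
    (x : EuclideanSpace ℝ (Fin (d + 1)))
    (hx : x ∈ Metric.sphere (0 : EuclideanSpace ℝ (Fin (d + 1))) 1) :
    |(∫ y, ‖r • x - y‖ ^ (-((d : ℝ) - 1)) ∂μ) -
        ∑ k, (μ (R k)).toReal * ‖r • x - t k‖ ^ (-((d : ℝ) - 1))|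
      ≤ ((d : ℝ) - 1) * (μ Set.univ).toReal * (1 - r) ^ (-((d : ℝ) + 1)) *
        (⨆ k, Metric.diam (R k)) := by
  set p : ℝ := (d : ℝ) - 1 with hpdef
  set z : EuclideanSpace ℝ (Fin (d + 1)) := r • x with hzdef
  set f : EuclideanSpace ℝ (Fin (d + 1)) → ℝ := fun y => ‖z - y‖ ^ (-p) with hfdef
  have hp1 : 1 ≤ p := by
    have : (2 : ℝ) ≤ (d : ℝ) := by exact_mod_cast hd
    simp only [hpdef]; linarith
  have hp0 : 0 ≤ p := by linarith
  have h1r : (0 : ℝ) < 1 - r := by linarith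
  have hxnorm : ‖x‖ = 1 := mem_sphere_zero_iff_norm.mp hx
  have hznorm : ‖z‖ = r := by
    simp [hzdef, norm_smul, abs_of_pos hr, hxnorm]
  have hlow : ∀ y ∈ Metric.sphere (0 : EuclideanSpace ℝ (Fin (d + 1))) 1,
      1 - r ≤ ‖z - y‖ := by
    intro y hy
    have hy1 : ‖y‖ = 1 := mem_sphere_zero_iff_norm.mp hy
    have h := norm_sub_norm_le y z
    rw [hy1, hznorm, norm_sub_rev] at h
    exact h
  have hfmeas : Measurable f :=
    ((measurable_const.sub measurable_id).norm).pow measurable_const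
  have hRsub : ∀ k, R k ⊆ Metric.sphere (0 : EuclideanSpace ℝ (Fin (d + 1))) 1 := by
    intro k; rw [← hRcover]; exact Set.subset_iUnion R k
  have haes : ∀ᵐ y ∂μ, y ∈ Metric.sphere (0 : EuclideanSpace ℝ (Fin (d + 1))) 1 := by
    rw [MeasureTheory.ae_iff]; exact hμsupp
  have hfbound : ∀ y ∈ Metric.sphere (0 : EuclideanSpace ℝ (Fin (d + 1))) 1,
      ‖f y‖ ≤ (1 - r) ^ (-p) := by
    intro y hy
    have h0 : 0 ≤ f y := Real.rpow_nonneg (norm_nonneg _) _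
    rw [Real.norm_eq_abs, abs_of_nonneg h0]
    exact Real.rpow_le_rpow_of_nonpos h1r (hlow y hy) (by linarith)
  have hfint : Integrable f μ := by
    refine Integrable.mono' (integrable_const ((1 - r) ^ (-p))) hfmeas.aestronglyMeasurable ?_
    filter_upwards [haes] with y hy using hfbound y hy
  have hrestr : μ.restrict (⋃ k, R k) = μ := by
    apply Measure.restrict_eq_self_of_ae_mem
    rw [hRcover]; exact haes
  have hsplit : (∫ y, f y ∂μ) = ∑ k, ∫ y in R k, f y ∂μ := by
    rw [← integral_iUnion_fintype hRmeas hRdisj (fun k => hfint.integrableOn)]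
    rw [show (∫ y in ⋃ k, R k, f y ∂μ) = ∫ y, f y ∂(μ.restrict (⋃ k, R k)) from rfl, hrestr]
  have hconst : ∀ k, (μ (R k)).toReal * f (t k) = ∫ y in R k, f (t k) ∂μ := by
    intro k; rw [setIntegral_const, smul_eq_mul]; rfl
  set D : ℝ := ⨆ k, Metric.diam (R k) with hDdef
  have hDnn : 0 ≤ D := Real.iSup_nonneg fun k => Metric.diam_nonneg
  have hDle : ∀ k, Metric.diam (R k) ≤ D := fun k =>
    le_ciSup (f := fun k => Metric.diam (R k)) (Set.Finite.bddAbove (Set.finite_range _)) k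
  set L : ℝ := p * (1 - r) ^ (-(p + 1)) with hLdef
  have hLnn : 0 ≤ L := mul_nonneg hp0 (Real.rpow_nonneg h1r.le _)
  have hkey : ∀ k, ∀ y ∈ R k, ‖f y - f (t k)‖ ≤ L * D := by
    intro k y hy
    have hyS := hRsub k hy
    have htS := hRsub k (htR k)
    have h1 := rpow_neg_lip hp0 h1r (hlow y hyS) (hlow (t k) htS)
    have h2 : |‖z - y‖ - ‖z - t k‖| ≤ ‖y - t k‖ := by
      have h := abs_norm_sub_norm_le (z - y) (z - t k)
      rw [show (z - y) - (z - t k) = -(y - t k) by abel, norm_neg] at h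
      exact h
    have hbd : Bornology.IsBounded (R k) :=
      (Metric.isBounded_sphere (x := (0 : EuclideanSpace ℝ (Fin (d + 1)))) (r := 1)).subset
        (hRsub k)
    have h3 : ‖y - t k‖ ≤ Metric.diam (R k) := by
      rw [← dist_eq_norm]
      exact Metric.dist_le_diam_of_mem hbd hy (htR k)
    calc ‖f y - f (t k)‖ = |f y - f (t k)| := Real.norm_eq_abs _
      _ ≤ L * |‖z - y‖ - ‖z - t k‖| := h1
      _ ≤ L * ‖y - t k‖ := mul_le_mul_of_nonneg_left h2 hLnn
      _ ≤ L * Metric.diam (R k) := mul_le_mul_of_nonneg_left h3 hLnn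
      _ ≤ L * D := mul_le_mul_of_nonneg_left (hDle k) hLnn
  have hpiece : ∀ k, ‖∫ y in R k, (f y - f (t k)) ∂μ‖ ≤ L * D * (μ (R k)).toReal :=
    fun k => norm_setIntegral_le_of_norm_le_const (measure_lt_top μ _) (hkey k)
  have hsum_meas : ∑ k, (μ (R k)).toReal ≤ (μ Set.univ).toReal := by
    have h1 : ∑ k, μ (R k) = μ (⋃ k, R k) := by
      rw [← tsum_fintype (L := SummationFilter.unconditional _)]
      exact (measure_iUnion (fun i j hij => hRdisj hij) hRmeas).symm
    have h2 : (∑ k, μ (R k)).toReal = ∑ k, (μ (R k)).toReal :=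
      ENNReal.toReal_sum fun k _ => measure_ne_top μ _
    rw [← h2, h1]
    exact ENNReal.toReal_mono (measure_ne_top μ _) (measure_mono (Set.subset_univ _))
  have hmain : |(∫ y, f y ∂μ) - ∑ k, (μ (R k)).toReal * f (t k)|
      ≤ L * D * (μ Set.univ).toReal := by
    rw [hsplit]
    have heq : (∑ k, ∫ y in R k, f y ∂μ) - ∑ k, (μ (R k)).toReal * f (t k)
        = ∑ k, ∫ y in R k, (f y - f (t k)) ∂μ := by
      rw [← Finset.sum_sub_distrib]
      refine Finset.sum_congr rfl fun k _ => ?_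
      rw [hconst k, ← integral_sub hfint.integrableOn
        (integrableOn_const (measure_lt_top μ _).ne)]
    rw [heq]
    calc |∑ k, ∫ y in R k, (f y - f (t k)) ∂μ|
        ≤ ∑ k, ‖∫ y in R k, (f y - f (t k)) ∂μ‖ := by
          simpa [Real.norm_eq_abs] using Finset.abs_sum_le_sum_abs
            (fun k => ∫ y in R k, (f y - f (t k)) ∂μ) Finset.univ
      _ ≤ ∑ k, L * D * (μ (R k)).toReal := Finset.sum_le_sum fun k _ => hpiece k
      _ = L * D * ∑ k, (μ (R k)).toReal := by rw [← Finset.mul_sum]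
      _ ≤ L * D * (μ Set.univ).toReal :=
          mul_le_mul_of_nonneg_left hsum_meas (mul_nonneg hLnn hDnn)
  have hLle : L ≤ p * (1 - r) ^ (-((d : ℝ) + 1)) := by
    have h1 : (1 - r) ^ (-(p + 1)) ≤ (1 - r) ^ (-((d : ℝ) + 1)) := by
      apply Real.rpow_le_rpow_of_exponent_ge h1r (by linarith)
      simp only [hpdef]; linarith
    exact mul_le_mul_of_nonneg_left h1 hp0
  calc |(∫ y, f y ∂μ) - ∑ k, (μ (R k)).toReal * f (t k)|
      ≤ L * D * (μ Set.univ).toReal := hmain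
    _ ≤ (p * (1 - r) ^ (-((d : ℝ) + 1))) * D * (μ Set.univ).toReal :=
        mul_le_mul_of_nonneg_right (mul_le_mul_of_nonneg_right hLle hDnn)
          ENNReal.toReal_nonneg
    _ = p * (μ Set.univ).toReal * (1 - r) ^ (-((d : ℝ) + 1)) * D := by ring
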